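/- Let h, g ∈ ℂ^N, h₀, g₀ ∈ ℂ, σ > 0, and 0 ≤ P_min ≤ P₀. For P_s ∈ [P_min, P₀] define S(P_s) = sup over unit vectors x ∈ ℂ^N of [σ² + P_s|h₀|² + (P₀ − P_s)|⟨h, x⟩|²] / [σ² + P_s|g₀|² + (P₀ − P_s)|⟨g, x⟩|²]. Then sup over P_s ∈ [P_min, P₀] of S(P_s) equals max{S(P_min), S(P₀)}; that is, the optimal source power in the decode-and-forward secrecy-rate maximization with one eavesdropper is either P_min or P₀. -/

import Mathlib

/-- Ratio of affine functions on an interval with positive denominator attains its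
maximum at an endpoint. -/
lemma mobius_max (a b c d u v p : ℝ) (hup : u ≤ p) (hpv : p ≤ v)
    (hDv : 0 < c + v * d) (hDp : 0 < c + p * d) (hDu : 0 < c + u * d) :
    (a + p * b) / (c + p * d) ≤
      max ((a + u * b) / (c + u * d)) ((a + v * b) / (c + v * d)) := by
  rcases le_total ((a + u * b) * (c + v * d)) ((a + v * b) * (c + u * d)) with h1 | h1
  · refine le_max_of_le_right ?_
    rw [div_le_div_iff₀ hDp hDv]
    rcases eq_or_lt_of_le hpv with rfl | hlt
    · linarith
    · have huv : u < v := lt_of_le_of_lt hup hlt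
      have hK : 0 ≤ b * c - a * d := by nlinarith
      nlinarith [mul_nonneg (sub_nonneg.mpr hpv) hK]
  · refine le_max_of_le_left ?_
    rw [div_le_div_iff₀ hDp hDu]
    rcases eq_or_lt_of_le hup with rfl | hlt
    · linarith
    · have huv : u < v := lt_of_lt_of_le hlt hpv
      have hK : b * c - a * d ≤ 0 := by nlinarith
      nlinarith [mul_nonpos_of_nonneg_of_nonpos (sub_nonneg.mpr hup) hK]

/-- In the DF secrecy-rate maximization with one eavesdropper, with
`S(Pₛ)` the optimal ratio for fixed source power `Pₛ`, the supremum of `S` over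
`[P_min, P₀]` equals `max {S(P_min), S(P₀)}`: the optimal source power is an endpoint. -/
theorem stmt7 {N : ℕ} (h g : EuclideanSpace ℂ (Fin N)) (h₀ g₀ : ℂ)
    (σ Pmin P₀ : ℝ) (hσ : 0 < σ) (hPmin : 0 ≤ Pmin) (hP : Pmin ≤ P₀)
    (S : ℝ → ℝ)
    (hS : ∀ Ps, S Ps = sSup {v : ℝ | ∃ x : EuclideanSpace ℂ (Fin N), ‖x‖ = 1 ∧
      v = (σ ^ 2 + Ps * ‖h₀‖ ^ 2 + (P₀ - Ps) * ‖(inner ℂ h x : ℂ)‖ ^ 2) /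
          (σ ^ 2 + Ps * ‖g₀‖ ^ 2 + (P₀ - Ps) * ‖(inner ℂ g x : ℂ)‖ ^ 2)}) :
    sSup {v : ℝ | ∃ Ps ∈ Set.Icc Pmin P₀, v = S Ps} = max (S Pmin) (S P₀) := by
  have hP₀ : 0 ≤ P₀ := le_trans hPmin hP
  set T : ℝ → Set ℝ := fun Ps => {v : ℝ | ∃ x : EuclideanSpace ℂ (Fin N), ‖x‖ = 1 ∧
      v = (σ ^ 2 + Ps * ‖h₀‖ ^ 2 + (P₀ - Ps) * ‖(inner ℂ h x : ℂ)‖ ^ 2) /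
          (σ ^ 2 + Ps * ‖g₀‖ ^ 2 + (P₀ - Ps) * ‖(inner ℂ g x : ℂ)‖ ^ 2)}
      with hT
  by_cases hN : ∃ x : EuclideanSpace ℂ (Fin N), ‖x‖ = 1
  · obtain ⟨x₀, hx₀⟩ := hN
    -- denominator positivity
    have hden : ∀ Ps ∈ Set.Icc Pmin P₀, ∀ x : EuclideanSpace ℂ (Fin N),
        0 < σ ^ 2 + Ps * ‖g₀‖ ^ 2 + (P₀ - Ps) * ‖(inner ℂ g x : ℂ)‖ ^ 2 := by
      intro Ps hPs x
      obtain ⟨h1, h2⟩ := hPs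
      have := mul_nonneg (le_trans hPmin h1) (sq_nonneg (‖g₀‖))
      have := mul_nonneg (sub_nonneg.mpr h2) (sq_nonneg (‖(inner ℂ g x : ℂ)‖))
      nlinarith
    -- upper bound for all elements of T Ps, uniform over Ps ∈ Icc
    set B : ℝ := (σ ^ 2 + P₀ * ‖h₀‖ ^ 2 + P₀ * ‖h‖ ^ 2) / σ ^ 2 with hB
    have hbound : ∀ Ps ∈ Set.Icc Pmin P₀, ∀ v ∈ T Ps, v ≤ B := by
      intro Ps hPs v hv
      obtain ⟨x, hx, rfl⟩ := hv
      obtain ⟨h1, h2⟩ := hPs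
      have hPs0 : 0 ≤ Ps := le_trans hPmin h1
      have hHle : ‖(inner ℂ h x : ℂ)‖ ^ 2 ≤ ‖h‖ ^ 2 := by
        have h3 : ‖(inner ℂ h x : ℂ)‖ = ‖(inner ℂ h x : ℂ)‖ :=
          rfl
        have h4 : ‖(inner ℂ h x : ℂ)‖ ≤ ‖h‖ * ‖x‖ := norm_inner_le_norm h x
        rw [hx, mul_one] at h4
        rw [h3]
        exact pow_le_pow_left₀ (norm_nonneg _) h4 2
      have hdg := hden Ps ⟨h1, h2⟩ x
      have hnum_le : σ ^ 2 + Ps * ‖h₀‖ ^ 2 + (P₀ - Ps) * ‖(inner ℂ h x : ℂ)‖ ^ 2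
          ≤ σ ^ 2 + P₀ * ‖h₀‖ ^ 2 + P₀ * ‖h‖ ^ 2 := by
        have e1 : Ps * ‖h₀‖ ^ 2 ≤ P₀ * ‖h₀‖ ^ 2 :=
          mul_le_mul_of_nonneg_right h2 (sq_nonneg _)
        have e2 : (P₀ - Ps) * ‖(inner ℂ h x : ℂ)‖ ^ 2 ≤ P₀ * ‖h‖ ^ 2 :=
          mul_le_mul (by linarith) hHle (sq_nonneg _) hP₀
        linarith
      have hden_ge : σ ^ 2 ≤ σ ^ 2 + Ps * ‖g₀‖ ^ 2 +
          (P₀ - Ps) * ‖(inner ℂ g x : ℂ)‖ ^ 2 := by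
        have := mul_nonneg hPs0 (sq_nonneg (‖g₀‖))
        have := mul_nonneg (sub_nonneg.mpr h2) (sq_nonneg (‖(inner ℂ g x : ℂ)‖))
        linarith
      rw [hB]
      refine div_le_div₀ ?_ hnum_le (by positivity) hden_ge
      have := mul_nonneg hP₀ (sq_nonneg (‖h₀‖))
      have := mul_nonneg hP₀ (sq_nonneg (‖h‖))
      nlinarith
    have hTne : ∀ Ps, (T Ps).Nonempty := fun Ps => ⟨_, ⟨x₀, hx₀, rfl⟩⟩
    have hTbdd : ∀ Ps ∈ Set.Icc Pmin P₀, BddAbove (T Ps) := fun Ps hPs =>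
      ⟨B, fun v hv => hbound Ps hPs v hv⟩
    have hPminIcc : Pmin ∈ Set.Icc Pmin P₀ := ⟨le_refl _, hP⟩
    have hP₀Icc : P₀ ∈ Set.Icc Pmin P₀ := ⟨hP, le_refl _⟩
    -- key step: S Ps ≤ max (S Pmin) (S P₀) for Ps in the interval
    have hSle : ∀ Ps ∈ Set.Icc Pmin P₀, S Ps ≤ max (S Pmin) (S P₀) := by
      intro Ps hPs
      rw [hS Ps]
      refine csSup_le (hTne Ps) ?_
      rintro v ⟨x, hx, rfl⟩
      have hrw : ∀ q : ℝ, ∀ A H : ℝ,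
          σ ^ 2 + q * A + (P₀ - q) * H = (σ ^ 2 + P₀ * H) + q * (A - H) := by
        intro q A H; ring
      set a := σ ^ 2 + P₀ * ‖(inner ℂ h x : ℂ)‖ ^ 2 with ha
      set b := ‖h₀‖ ^ 2 - ‖(inner ℂ h x : ℂ)‖ ^ 2 with hb
      set c := σ ^ 2 + P₀ * ‖(inner ℂ g x : ℂ)‖ ^ 2 with hc
      set d := ‖g₀‖ ^ 2 - ‖(inner ℂ g x : ℂ)‖ ^ 2 with hd
      have heq : ∀ q : ℝ,
          (σ ^ 2 + q * ‖h₀‖ ^ 2 + (P₀ - q) * ‖(inner ℂ h x : ℂ)‖ ^ 2) /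
            (σ ^ 2 + q * ‖g₀‖ ^ 2 + (P₀ - q) * ‖(inner ℂ g x : ℂ)‖ ^ 2)
          = (a + q * b) / (c + q * d) := by
        intro q
        rw [ha, hb, hc, hd]
        congr 1 <;> ring
      have hdq : ∀ q ∈ Set.Icc Pmin P₀, 0 < c + q * d := by
        intro q hq
        have h5 := hden q hq x
        have h6 : c + q * d = σ ^ 2 + q * ‖g₀‖ ^ 2 +
            (P₀ - q) * ‖(inner ℂ g x : ℂ)‖ ^ 2 := by rw [hc, hd]; ring
        linarith
      rw [heq Ps]
      have hmob := mobius_max a b c d Pmin P₀ Ps hPs.1 hPs.2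
        (hdq P₀ hP₀Icc) (hdq Ps hPs) (hdq Pmin hPminIcc)
      refine le_trans hmob (max_le_max ?_ ?_)
      · rw [hS Pmin, ← heq Pmin]
        exact le_csSup (hTbdd Pmin hPminIcc) ⟨x, hx, rfl⟩
      · rw [hS P₀, ← heq P₀]
        exact le_csSup (hTbdd P₀ hP₀Icc) ⟨x, hx, rfl⟩
    -- conclude
    apply le_antisymm
    · refine csSup_le ⟨S Pmin, ⟨Pmin, hPminIcc, rfl⟩⟩ ?_
      rintro v ⟨Ps, hPs, rfl⟩
      exact hSle Ps hPs
    · have hbdd : BddAbove {v : ℝ | ∃ Ps ∈ Set.Icc Pmin P₀, v = S Ps} :=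
        ⟨max (S Pmin) (S P₀), by rintro v ⟨Ps, hPs, rfl⟩; exact hSle Ps hPs⟩
      refine max_le ?_ ?_
      · exact le_csSup hbdd ⟨Pmin, hPminIcc, rfl⟩
      · exact le_csSup hbdd ⟨P₀, hP₀Icc, rfl⟩
  · -- no unit vectors: all the sets are empty and every sSup is 0
    have hTempty : ∀ Ps, T Ps = ∅ := by
      intro Ps
      ext v
      simp only [hT, Set.mem_setOf_eq, Set.mem_empty_iff_false, iff_false]
      rintro ⟨x, hx, -⟩
      exact hN ⟨x, hx⟩
    have hS0 : ∀ Ps, S Ps = 0 := by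
      intro Ps
      rw [hS Ps, show {v : ℝ | ∃ x : EuclideanSpace ℂ (Fin N), ‖x‖ = 1 ∧
        v = (σ ^ 2 + Ps * ‖h₀‖ ^ 2 + (P₀ - Ps) * ‖(inner ℂ h x : ℂ)‖ ^ 2) /
          (σ ^ 2 + Ps * ‖g₀‖ ^ 2 + (P₀ - Ps) * ‖(inner ℂ g x : ℂ)‖ ^ 2)}
        = (∅ : Set ℝ) from hTempty Ps, Real.sSup_empty]
    have : {v : ℝ | ∃ Ps ∈ Set.Icc Pmin P₀, v = S Ps} = {0} := by
      ext v
      simp only [Set.mem_setOf_eq, Set.mem_singleton_iff]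
      constructor
      · rintro ⟨Ps, -, rfl⟩; exact hS0 Ps
      · rintro rfl; exact ⟨Pmin, ⟨le_refl _, hP⟩, (hS0 Pmin).symm⟩
    rw [this, csSup_singleton, hS0 Pmin, hS0 P₀, max_self]
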